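/- Fix m ≥ 2 and a positive integer n. Then g_m(n) = n if and only if n = k^d for some positive integers k, d with gcd(d, m) > 1. Here g_m(n) = n means there exists j with 1 ≤ j ≤ m−1 such that n^j is a perfect m-th power. -/

import Mathlib

/-- An `m`-product sequence (as a multiset): a nonempty multiset of positive
integers in which no value occurs `m` or more times and whose product is a
perfect `m`-th power. -/
def IsMProdSeq (m : ℕ) (M : Multiset ℕ) : Prop :=
  M ≠ 0 ∧ (∀ a ∈ M, 0 < a) ∧ (∀ a, M.count a < m) ∧ ∃ R : ℕ, M.prod = R ^ m

/-- `gm m n`: the least `s` such that some `m`-product sequence has smallest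
term `n` and largest term `s`. -/
noncomputable def gm (m n : ℕ) : ℕ :=
  sInf {s | ∃ M : Multiset ℕ, IsMProdSeq m M ∧ n ∈ M ∧ s ∈ M ∧ ∀ a ∈ M, n ≤ a ∧ a ≤ s}

/-- If `d` divides every exponent in the factorization of `n`, then `n` is a
`d`-th power. -/
lemma exists_pow_of_dvd_factorization {n d : ℕ} (hn : n ≠ 0)
    (h : ∀ p, d ∣ n.factorization p) : ∃ k : ℕ, n = k ^ d := by
  refine ⟨n.factorization.prod fun p e => p ^ (e / d), ?_⟩
  conv_lhs => rw [← Nat.factorization_prod_pow_eq_self hn]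
  rw [Finsupp.prod, Finsupp.prod, ← Finset.prod_pow]
  refine Finset.prod_congr rfl fun p hp => ?_
  rw [← pow_mul, Nat.div_mul_cancel (h p)]

lemma key_number_theory {m n : ℕ} (hm : 2 ≤ m) (hn : 0 < n) :
    (∃ j R : ℕ, 1 ≤ j ∧ j < m ∧ n ^ j = R ^ m) ↔
      ∃ k d : ℕ, 0 < k ∧ 0 < d ∧ 1 < Nat.gcd d m ∧ n = k ^ d := by
  constructor
  · rintro ⟨j, R, hj1, hjm, hpow⟩
    rcases eq_or_lt_of_le (show 1 ≤ n from hn) with h1 | h1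
    · exact ⟨1, m, one_pos, by omega, by rw [Nat.gcd_self]; omega, by simp [← h1]⟩
    set g := Nat.gcd j m with hg
    have hg0 : 0 < g := Nat.gcd_pos_of_pos_left m (by omega)
    have hgj : g ∣ j := Nat.gcd_dvd_left j m
    have hgm : g ∣ m := Nat.gcd_dvd_right j m
    set d := m / g with hd
    have hdm : d * g = m := Nat.div_mul_cancel hgm
    have hd1 : 1 < d := by
      rcases Nat.lt_or_ge d 2 with h | h
      · interval_cases d
        · omega
        · have : g = m := by omega
          have : m ∣ j := this ▸ hgj
          have := Nat.le_of_dvd (by omega) this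
          omega
      · omega
    have hcop : Nat.Coprime (j / g) d := by
      have := Nat.coprime_div_gcd_div_gcd (m := j) (n := m) hg0
      exact this
    have hdvd : ∀ p, d ∣ n.factorization p := by
      intro p
      have hfac : (n ^ j).factorization = (R ^ m).factorization := by rw [hpow]
      have hR : R ≠ 0 := by
        intro h0
        rw [h0, zero_pow (by omega)] at hpow
        exact absurd (pow_eq_zero_iff (by omega) |>.mp hpow) (by omega)
      rw [Nat.factorization_pow, Nat.factorization_pow] at hfac
      have hp : j * n.factorization p = m * R.factorization p := by
        have := DFunLike.congr_fun hfac p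
        simpa [Finsupp.smul_apply, smul_eq_mul] using this
      -- j = g * (j/g), m = g * d
      have hj' : g * (j / g) = j := Nat.mul_div_cancel' hgj
      have heq : g * ((j / g) * n.factorization p) = g * (d * R.factorization p) := by
        calc g * ((j / g) * n.factorization p) = (g * (j / g)) * n.factorization p := by ring
          _ = j * n.factorization p := by rw [hj']
          _ = m * R.factorization p := hp
          _ = (g * d) * R.factorization p := by rw [mul_comm g d, hdm]
          _ = g * (d * R.factorization p) := by ring
      have heq2 : (j / g) * n.factorization p = d * R.factorization p :=
        Nat.eq_of_mul_eq_mul_left hg0 heq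
      have : d ∣ (j / g) * n.factorization p := ⟨R.factorization p, heq2⟩
      exact (Nat.Coprime.dvd_of_dvd_mul_left (Nat.Coprime.symm hcop) this)
    obtain ⟨k, hk⟩ := exists_pow_of_dvd_factorization (by omega) hdvd
    have hk0 : 0 < k := by
      rcases Nat.eq_zero_or_pos k with h | h
      · rw [h, zero_pow (by omega)] at hk; omega
      · exact h
    exact ⟨k, d, hk0, by omega, by rwa [Nat.gcd_eq_left ⟨g, hdm.symm⟩], hk⟩
  · rintro ⟨k, d, hk, hd, hgcd, rfl⟩
    set g := Nat.gcd d m with hg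
    have hgd : g ∣ d := Nat.gcd_dvd_left d m
    have hgm : g ∣ m := Nat.gcd_dvd_right d m
    have hg0 : 1 < g := hgcd
    refine ⟨m / g, k ^ (d / g), ?_, ?_, ?_⟩
    · have : 0 < m / g := Nat.div_pos (Nat.le_of_dvd (by omega) hgm) (by omega)
      omega
    · exact Nat.div_lt_self (by omega) hg0
    · rw [← pow_mul, ← pow_mul]
      congr 1
      obtain ⟨d', hd'⟩ := hgd
      obtain ⟨m', hm'⟩ := hgm
      rw [hd', hm', Nat.mul_div_cancel_left _ (by omega : 0 < g),
        Nat.mul_div_cancel_left _ (by omega : 0 < g)]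
      ring

theorem stmt_5 (m n : ℕ) (hm : 2 ≤ m) (hn : 0 < n) :
    gm m n = n ↔ ∃ k d : ℕ, 0 < k ∧ 0 < d ∧ 1 < Nat.gcd d m ∧ n = k ^ d := by
  rw [← key_number_theory hm hn]
  set S := {s | ∃ M : Multiset ℕ, IsMProdSeq m M ∧ n ∈ M ∧ s ∈ M ∧ ∀ a ∈ M, n ≤ a ∧ a ≤ s}
    with hS
  constructor
  · intro h
    have hne : S.Nonempty := by
      by_contra hc
      rw [Set.not_nonempty_iff_eq_empty] at hc
      rw [gm, ← hS, hc, Nat.sInf_empty] at h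
      omega
    have hmem : n ∈ S := by
      have := Nat.sInf_mem hne
      rwa [show sInf S = n from h] at this
    obtain ⟨M, ⟨hM0, _, hMc, R, hMp⟩, hnM, _, hall⟩ := hmem
    have heq : ∀ b ∈ M, b = n := fun b hb => le_antisymm ((hall b hb).2) ((hall b hb).1)
    have hrep : M = Multiset.replicate (Multiset.card M) n :=
      (Multiset.eq_replicate_card).2 heq
    refine ⟨Multiset.card M, R, ?_, ?_, ?_⟩
    · have := Multiset.card_pos_iff_exists_mem.2 ⟨n, hnM⟩; omega
    · have := hMc n
      rwa [hrep, Multiset.count_replicate_self] at this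
    · rw [hrep, Multiset.prod_replicate] at hMp
      exact hMp
  · rintro ⟨j, R, hj1, hjm, hpow⟩
    have hmem : n ∈ S := by
      refine ⟨Multiset.replicate j n, ⟨?_, ?_, ?_, R, ?_⟩, ?_, ?_, ?_⟩
      · intro h0
        have := congrArg Multiset.card h0
        simp at this; omega
      · intro a ha
        rw [Multiset.eq_of_mem_replicate ha]; exact hn
      · intro a
        rcases eq_or_ne a n with rfl | hne
        · rw [Multiset.count_replicate_self]; omega
        · rw [Multiset.count_replicate, if_neg (Ne.symm hne)]; omega
      · rw [Multiset.prod_replicate]; exact hpow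
      · exact Multiset.mem_replicate.2 ⟨by omega, rfl⟩
      · exact Multiset.mem_replicate.2 ⟨by omega, rfl⟩
      · intro a ha
        rw [Multiset.eq_of_mem_replicate ha]
        exact ⟨le_refl n, le_refl n⟩
    have hlb : ∀ s ∈ S, n ≤ s := by
      rintro s ⟨M, _, hnM, hsM, hall⟩
      exact (hall s hsM).1
    exact le_antisymm (Nat.sInf_le hmem) (le_csInf ⟨n, hmem⟩ hlb)
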